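/- Let p ≺_h q be 2-dimensional non-increasing probability vectors with p_1 > 0, and let a ∈ [1/2, 1] satisfy p = R q with R = [[a,1−a],[1−a,a]]. Then the pair of Kraus operators L₁ = diag(√(a q_0/p_0), √(a q_1/p_1)) and L₂ with entries (L₂)_{0,1} = √((1−a) q_0/p_1), (L₂)_{1,0} = √((1−a) q_1/p_0) satisfies L₁†L₁ + L₂†L₂ = I, and the induced CPTP map Φ sends the pure state |ψ⟩ = √p_0|0⟩ + √p_1|1⟩ to |φ⟩ = √q_0|0⟩ + √q_1|1⟩, i.e., Φ(|ψ⟩⟨ψ|) = |φ⟩⟨φ|. -/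

import Mathlib

open Matrix

theorem kraus_pure_state_transformation (p q : Fin 2 → ℝ)
    (hp : 0 < p 1) (hp01 : p 1 ≤ p 0) (hpsum : p 0 + p 1 = 1)
    (hq1 : 0 ≤ q 1) (hq01 : q 1 ≤ q 0) (hqsum : q 0 + q 1 = 1)
    (a : ℝ) (ha : 1 / 2 ≤ a) (ha1 : a ≤ 1)
    (hR : (fun i => (!![a, 1 - a; 1 - a, a]).mulVec q i) = p)
    (L₁ L₂ : Matrix (Fin 2) (Fin 2) ℝ)
    (hL₁ : L₁ = !![Real.sqrt (a * q 0 / p 0), 0; 0, Real.sqrt (a * q 1 / p 1)])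
    (hL₂ : L₂ = !![0, Real.sqrt ((1 - a) * q 0 / p 1);
                   Real.sqrt ((1 - a) * q 1 / p 0), 0]) :
    L₁ᵀ * L₁ + L₂ᵀ * L₂ = 1 ∧
    (L₁ * vecMulVec (fun i => Real.sqrt (p i)) (fun i => Real.sqrt (p i)) * L₁ᵀ +
     L₂ * vecMulVec (fun i => Real.sqrt (p i)) (fun i => Real.sqrt (p i)) * L₂ᵀ) =
      vecMulVec (fun i => Real.sqrt (q i)) (fun i => Real.sqrt (q i)) := by
  have hp0 : 0 < p 0 := lt_of_lt_of_le hp hp01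
  have hq0 : 0 ≤ q 0 := le_trans hq1 hq01
  have ha0 : 0 ≤ a := by linarith
  have h1a : 0 ≤ 1 - a := by linarith
  have hp0eq : a * q 0 + (1 - a) * q 1 = p 0 := by
    have := congrFun hR 0
    simpa [Matrix.mulVec, dotProduct, Fin.sum_univ_two, Matrix.vecHead, Matrix.vecTail] using this
  have hp1eq : (1 - a) * q 0 + a * q 1 = p 1 := by
    have := congrFun hR 1
    simpa [Matrix.mulVec, dotProduct, Fin.sum_univ_two, Matrix.vecHead, Matrix.vecTail] using this
  -- rewrite the sqrt entries
  have hs : ∀ (c x : ℝ) (y : ℝ), 0 ≤ c → 0 ≤ x →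
      Real.sqrt (c * x / y) = Real.sqrt c * Real.sqrt x / Real.sqrt y := by
    intro c x y hc hx
    rw [Real.sqrt_div (by positivity), Real.sqrt_mul hc]
  rw [hs a (q 0) (p 0) ha0 hq0, hs a (q 1) (p 1) ha0 hq1] at hL₁
  rw [hs (1-a) (q 0) (p 1) h1a hq0, hs (1-a) (q 1) (p 0) h1a hq1] at hL₂
  set α := Real.sqrt a with hα
  set β := Real.sqrt (1 - a) with hβ
  set s0 := Real.sqrt (q 0) with hs0
  set s1 := Real.sqrt (q 1) with hs1
  set t0 := Real.sqrt (p 0) with ht0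
  set t1 := Real.sqrt (p 1) with ht1
  have hα2 : α * α = a := Real.mul_self_sqrt ha0
  have hβ2 : β * β = 1 - a := Real.mul_self_sqrt h1a
  have hs02 : s0 * s0 = q 0 := Real.mul_self_sqrt hq0
  have hs12 : s1 * s1 = q 1 := Real.mul_self_sqrt hq1
  have ht02 : t0 * t0 = p 0 := Real.mul_self_sqrt hp0.le
  have ht12 : t1 * t1 = p 1 := Real.mul_self_sqrt hp.le
  have ht0pos : 0 < t0 := Real.sqrt_pos.mpr hp0
  have ht1pos : 0 < t1 := Real.sqrt_pos.mpr hp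
  have hab : α * α + β * β = 1 := by rw [hα2, hβ2]; ring
  have k0 : α * s0 * (α * s0) + β * s1 * (β * s1) = t0 * t0 := by
    rw [show α * s0 * (α * s0) + β * s1 * (β * s1)
        = α * α * (s0 * s0) + β * β * (s1 * s1) by ring, hα2, hβ2, hs02, hs12, ht02]
    exact hp0eq
  have k1 : α * s1 * (α * s1) + β * s0 * (β * s0) = t1 * t1 := by
    rw [show α * s1 * (α * s1) + β * s0 * (β * s0)
        = α * α * (s1 * s1) + β * β * (s0 * s0) by ring, hα2, hβ2, hs12, hs02, ht12]
    linarith [hp1eq]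
  constructor
  · ext i j
    fin_cases i <;> fin_cases j <;>
      simp [hL₁, hL₂, Matrix.mul_apply, Fin.sum_univ_two, Matrix.one_apply,
        Matrix.vecHead, Matrix.vecTail] <;>
      field_simp <;> linarith [k0, k1]
  · ext i j
    fin_cases i <;> fin_cases j <;>
      (simp [hL₁, hL₂, Matrix.mul_apply, Fin.sum_univ_two, vecMulVec_apply,
        Matrix.vecMul, dotProduct, Matrix.vecHead, Matrix.vecTail];
       field_simp;
       (try simp only [← ht0, ← ht1, ← hs0, ← hs1]); (try simp only [← ht02, ← ht12, ← hs02, ← hs12]);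
       first
       | linear_combination (s0 * s0 * t0 * t0 * t1 * t1) * hab
       | linear_combination (s0 * s1 * t0 * t0 * t1 * t1) * hab
       | linear_combination (s1 * s1 * t0 * t0 * t1 * t1) * hab
       | linear_combination (s0 * s1 * t0 * t1) * hab)
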